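/- Let N ≥ 1 be an integer, h ≠ 0, R > 0, ε > 0, μ > 0. Set θ_j = 2π(j−1)/N, let Q_j be the rotation matrix of angle θ_j, P_j = R·Q_j·(1,0), M = diag(h/√(h²+R²), 1), and M_j = Q_j M, for j = 1,…,N. Let c₁ = Rh/(2(h²+R²)^{3/2}), c₂ = (R²/(8(h²+R²)²))·(2h²/(h²+R²) + 1), let h₁ : [0,∞) → ℝ be any function, and define Ψ_{εμ}(z) = log(8/(ε²μ² + |z|²)²)·(1 + c₁ z₁ + c₂|z|²) + (4R³/(h(h²+R²)^{3/2}))·h₁(|z|)cos(3θ), where z = |z|e^{iθ}. Define Ψ₀(z) = Σ_{j=1}^N Ψ_{εμ}(M_j^{-1}(P₁ − P_j + Mz)). Then Ψ₀(z₁, z₂) = Ψ₀(z₁, −z₂) for all (z₁,z₂) ∈ ℝ². -/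

import Mathlib

open Real

noncomputable section

/-- Points of `ℝ²` as pairs. -/
abbrev R2 : Type := ℝ × ℝ

/-- Rotation of `ℝ²` by angle `θ`. -/
def rot (θ : ℝ) (p : R2) : R2 :=
  (Real.cos θ * p.1 - Real.sin θ * p.2, Real.sin θ * p.1 + Real.cos θ * p.2)

/-- The linear map `M = diag(h/√(h²+R²), 1)`. -/
def Mmap (h R : ℝ) (z : R2) : R2 := (h / Real.sqrt (h ^ 2 + R ^ 2) * z.1, z.2)

/-- The inverse `M⁻¹ = diag(√(h²+R²)/h, 1)`. -/
def Minv (h R : ℝ) (p : R2) : R2 := (Real.sqrt (h ^ 2 + R ^ 2) / h * p.1, p.2)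

/-- `M_j⁻¹ = M⁻¹ Q_j⁻¹`, with `Q_j` the rotation of angle `θ_j = 2πj/N`
(indices `j : ℕ` starting from `0` represent `j+1 = 1, …, N`). -/
def Mjinv (h R : ℝ) (N : ℕ) (j : ℕ) (p : R2) : R2 :=
  Minv h R (rot (-(2 * Real.pi * j / N)) p)

/-- The vertex `P_j = R·Q_{2πj/N}·(1,0)` of the regular `N`-gon of radius `R`. -/
def Pt (R : ℝ) (N : ℕ) (j : ℕ) : R2 := rot (2 * Real.pi * j / N) (R, 0)

/-- The polar angle of `z ∈ ℝ²`. -/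
def argR2 (z : R2) : ℝ := Complex.arg ((z.1 : ℂ) + (z.2 : ℂ) * Complex.I)

/-- The locally defined approximate stream function of one helical filament:
`Ψ_{εμ}(z) = log(8/(ε²μ²+|z|²)²)(1 + c₁z₁ + c₂|z|²) + (4R³/(h(h²+R²)^{3/2})) h₁(|z|)cos 3θ`,
with `c₁ = Rh/(2(h²+R²)^{3/2})` and `c₂ = (R²/(8(h²+R²)²))(2h²/(h²+R²)+1)`. -/
def PsiEps (h R ε μ : ℝ) (h₁ : ℝ → ℝ) (z : R2) : ℝ :=
  Real.log (8 / (ε ^ 2 * μ ^ 2 + z.1 ^ 2 + z.2 ^ 2) ^ 2)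
      * (1 + R * h / (2 * Real.sqrt (h ^ 2 + R ^ 2) ^ 3) * z.1
          + R ^ 2 / (8 * (h ^ 2 + R ^ 2) ^ 2) * (2 * h ^ 2 / (h ^ 2 + R ^ 2) + 1)
            * (z.1 ^ 2 + z.2 ^ 2))
    + 4 * R ^ 3 / (h * Real.sqrt (h ^ 2 + R ^ 2) ^ 3)
        * h₁ (Real.sqrt (z.1 ^ 2 + z.2 ^ 2)) * Real.cos (3 * argR2 z)

/-- The total approximate stream function in the coordinates `z = M⁻¹(x − P₁)` centered
at the first vertex: `Ψ₀(z) = ∑_{j=1}^N Ψ_{εμ}(M_j⁻¹(P₁ − P_j + Mz))`. -/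
def Psi0 (N : ℕ) (h R ε μ : ℝ) (h₁ : ℝ → ℝ) (z : R2) : ℝ :=
  ∑ j ∈ Finset.range N,
    PsiEps h R ε μ h₁ (Mjinv h R N j (Pt R N 0 - Pt R N j + Mmap h R z))

lemma psiEps_even (h R ε μ a b : ℝ) (h₁ : ℝ → ℝ) :
    PsiEps h R ε μ h₁ (a, -b) = PsiEps h R ε μ h₁ (a, b) := by
  have harg : Real.cos (3 * argR2 (a, -b)) = Real.cos (3 * argR2 (a, b)) := by
    have key : ((a : ℂ) + ((-b : ℝ) : ℂ) * Complex.I) =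
        (starRingEnd ℂ) ((a:ℂ) + (b:ℂ)*Complex.I) := by
      push_cast
      simp [Complex.ext_iff]
    unfold argR2
    simp only [key, Complex.arg_conj]
    split
    · rename_i hπ; rw [hπ]
    · rw [mul_neg, Real.cos_neg]
  unfold PsiEps
  simp only [neg_sq, harg]

lemma trig_pair (N j : ℕ) (hN : 1 ≤ N) (hj : j < N) :
    Real.cos (2 * Real.pi * ((N - j) % N : ℕ) / N) = Real.cos (2 * Real.pi * j / N) ∧
    Real.sin (2 * Real.pi * ((N - j) % N : ℕ) / N) = -Real.sin (2 * Real.pi * j / N) := by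
  rcases Nat.eq_zero_or_pos j with rfl | hjpos
  · simp [Nat.mod_self]
  · have h1 : (N - j) % N = N - j := Nat.mod_eq_of_lt (by omega)
    have h2 : ((N - j : ℕ) : ℝ) = (N : ℝ) - j := by
      have : j ≤ N := le_of_lt hj
      push_cast [this]; ring
    have hNne : (N : ℝ) ≠ 0 := by positivity
    have h3 : 2 * Real.pi * ((N - j) % N : ℕ) / N = 2 * Real.pi - 2 * Real.pi * j / N := by
      rw [h1, h2]; field_simp
    rw [h3]
    constructor
    · rw [Real.cos_sub, Real.cos_two_pi, Real.sin_two_pi]; ring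
    · rw [Real.sin_sub, Real.cos_two_pi, Real.sin_two_pi]; ring

lemma point_eq (h R : ℝ) (N j : ℕ) (hN : 1 ≤ N) (hj : j < N) (z₁ z₂ : ℝ) :
    Mjinv h R N j (Pt R N 0 - Pt R N j + Mmap h R (z₁, -z₂)) =
      ((Mjinv h R N ((N - j) % N)
        (Pt R N 0 - Pt R N ((N - j) % N) + Mmap h R (z₁, z₂))).1,
       -(Mjinv h R N ((N - j) % N)
        (Pt R N 0 - Pt R N ((N - j) % N) + Mmap h R (z₁, z₂))).2) := by
  obtain ⟨hc, hs⟩ := trig_pair N j hN hj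
  simp only [Mjinv, Minv, rot, Mmap, Pt, Real.cos_neg, Real.sin_neg, hc, hs,
    Prod.mk.injEq, Prod.fst_sub, Prod.snd_sub, Prod.fst_add, Prod.snd_add,
    Nat.cast_zero, mul_zero, zero_div, Real.cos_zero, Real.sin_zero]
  constructor <;> ring

/-- **Evenness of the approximate stream function** (Proposition 3.2):
`Ψ₀(z₁, z₂) = Ψ₀(z₁, −z₂)`. -/
theorem Psi0_even_in_z2
    (N : ℕ) (hN : 1 ≤ N) (h R ε μ : ℝ) (hh : h ≠ 0) (hR : 0 < R) (hε : 0 < ε) (hμ : 0 < μ)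
    (h₁ : ℝ → ℝ) :
    ∀ z₁ z₂ : ℝ, Psi0 N h R ε μ h₁ (z₁, z₂) = Psi0 N h R ε μ h₁ (z₁, -z₂) := by
  intro z₁ z₂
  unfold Psi0
  refine (Finset.sum_nbij' (i := fun j => (N - j) % N) (j := fun j => (N - j) % N)
    ?_ ?_ ?_ ?_ ?_).symm
  · intro a ha
    simp only [Finset.mem_range] at *
    exact Nat.mod_lt _ (by omega)
  · intro a ha
    simp only [Finset.mem_range] at *
    exact Nat.mod_lt _ (by omega)
  · intro a ha
    simp only [Finset.mem_range] at ha
    show (N - (N - a) % N) % N = a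
    rcases Nat.eq_zero_or_pos a with rfl | hpos
    · simp [Nat.mod_self]
    · have h1 : (N - a) % N = N - a := Nat.mod_eq_of_lt (by omega)
      rw [h1]
      have h2 : (N - (N - a)) = a := by omega
      rw [h2, Nat.mod_eq_of_lt ha]
  · intro a ha
    simp only [Finset.mem_range] at ha
    show (N - (N - a) % N) % N = a
    rcases Nat.eq_zero_or_pos a with rfl | hpos
    · simp [Nat.mod_self]
    · have h1 : (N - a) % N = N - a := Nat.mod_eq_of_lt (by omega)
      rw [h1]
      have h2 : (N - (N - a)) = a := by omega
      rw [h2, Nat.mod_eq_of_lt ha]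
  · intro a ha
    simp only [Finset.mem_range] at ha
    rw [point_eq h R N a hN ha z₁ z₂, psiEps_even]

end
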